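/- Let (a_n)_{n≥0} and (b_n)_{n≥0} be sequences of algebraic numbers, let s ≥ 0 and b, b', C, C' ≥ 1 be integers such that D_{bn}^s · C^{n+1} · a_n and D_{b'n}^s · C'^{n+1} · b_n are algebraic integers for all n ≥ 0, and let λ, μ be algebraic numbers. Then there exist positive integers b'' and C'' such that D_{b''n}^s · C''^{n+1} · (λ·a_n + μ·b_n) is an algebraic integer for all n ≥ 0. In particular, the set of sequences with this denominator property is closed under algebraic-number linear combinations, so that 𝒢_s is a vector space over the algebraic numbers. -/

import Mathlib

/-- `D n = lcm {1, 2, …, n}`, with `D 0 = 1`. -/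
def D (n : ℕ) : ℕ := (Finset.Icc 1 n).lcm id

lemma D_dvd_D {m m' : ℕ} (h : m ≤ m') : D m ∣ D m' := by
  apply Finset.lcm_dvd
  intro i hi
  simp only [Finset.mem_Icc] at hi
  exact Finset.dvd_lcm (by simp [Finset.mem_Icc]; omega)

lemma nat_isIntegral (m : ℕ) : IsIntegral ℤ ((m : ℂ)) := by
  simpa using isIntegral_algebraMap (R := ℤ) (A := ℂ) (x := (m : ℤ))

lemma exists_nat_mul_integral {z : ℂ} (hz : IsAlgebraic ℚ z) :
    ∃ d : ℕ, 0 < d ∧ IsIntegral ℤ ((d : ℂ) * z) := by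
  have hz' : IsAlgebraic ℤ z := (IsFractionRing.isAlgebraic_iff ℤ ℚ ℂ).mpr hz
  obtain ⟨x, y, hy, hxy⟩ : ∃ x : integralClosure ℤ ℂ, ∃ y ≠ (0 : ℤ), algebraMap ℤ ℂ y * z = x := by
    obtain ⟨y, hy, hi⟩ := hz'.exists_integral_multiple
    exact ⟨⟨_, hi⟩, y, hy, by simp [Algebra.smul_def]⟩
  simp only [algebraMap_int_eq, eq_intCast] at hxy
  refine ⟨y.natAbs, Int.natAbs_pos.mpr hy, ?_⟩
  rcases Int.natAbs_eq y with h | h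
  · have hc : ((y.natAbs : ℕ) : ℂ) = ((y : ℤ) : ℂ) := by
      conv_rhs => rw [h]
      exact (Int.cast_natCast y.natAbs).symm
    have he : ((y.natAbs : ℂ) * z) = (x : ℂ) := by rw [hc, hxy]
    rw [he]; exact x.2
  · have hc : ((y.natAbs : ℕ) : ℂ) = -((y : ℤ) : ℂ) := by
      conv_rhs => rw [h]
      rw [Int.cast_neg, Int.cast_natCast, neg_neg]
    have he : ((y.natAbs : ℂ) * z) = -(x : ℂ) := by rw [hc, neg_mul, hxy]
    rw [he]; exact x.2.neg

theorem linear_combination_denominators (a b : ℕ → ℂ) (s bb bb' C C' : ℕ)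
    (hbb : 1 ≤ bb) (hbb' : 1 ≤ bb') (hC : 1 ≤ C) (hC' : 1 ≤ C')
    (ha : ∀ n : ℕ, IsIntegral ℤ ((D (bb * n) : ℂ) ^ s * (C : ℂ) ^ (n + 1) * a n))
    (hb : ∀ n : ℕ, IsIntegral ℤ ((D (bb' * n) : ℂ) ^ s * (C' : ℂ) ^ (n + 1) * b n))
    (lam mu : ℂ) (hlam : IsAlgebraic ℚ lam) (hmu : IsAlgebraic ℚ mu) :
    ∃ b'' C'' : ℕ, 0 < b'' ∧ 0 < C'' ∧ ∀ n : ℕ,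
      IsIntegral ℤ ((D (b'' * n) : ℂ) ^ s * (C'' : ℂ) ^ (n + 1) * (lam * a n + mu * b n)) := by
  obtain ⟨dl, hdl, hdll⟩ := exists_nat_mul_integral hlam
  obtain ⟨dm, hdm, hdmm⟩ := exists_nat_mul_integral hmu
  refine ⟨bb * bb', C * C' * dl * dm, Nat.mul_pos hbb hbb',
    by positivity, fun n => ?_⟩
  obtain ⟨k, hk⟩ := D_dvd_D (Nat.mul_le_mul_right n (Nat.le_mul_of_pos_right bb hbb') :
    bb * n ≤ bb * bb' * n)
  obtain ⟨k', hk'⟩ := D_dvd_D (show bb' * n ≤ bb * bb' * n by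
    rw [mul_assoc]; exact Nat.le_mul_of_pos_left _ hbb)
  have e1 : (D (bb * bb' * n) : ℂ) ^ s * ((C * C' * dl * dm : ℕ) : ℂ) ^ (n + 1) *
      (lam * a n) =
      ((k ^ s * (C' * dm) ^ (n + 1) * dl ^ n : ℕ) : ℂ) * ((dl : ℂ) * lam) *
        ((D (bb * n) : ℂ) ^ s * (C : ℂ) ^ (n + 1) * a n) := by
    rw [hk]; push_cast; ring
  have e2 : (D (bb * bb' * n) : ℂ) ^ s * ((C * C' * dl * dm : ℕ) : ℂ) ^ (n + 1) *
      (mu * b n) =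
      ((k' ^ s * (C * dl) ^ (n + 1) * dm ^ n : ℕ) : ℂ) * ((dm : ℂ) * mu) *
        ((D (bb' * n) : ℂ) ^ s * (C' : ℂ) ^ (n + 1) * b n) := by
    rw [hk']; push_cast; ring
  have key : (D (bb * bb' * n) : ℂ) ^ s * ((C * C' * dl * dm : ℕ) : ℂ) ^ (n + 1) *
      (lam * a n + mu * b n) =
      ((k ^ s * (C' * dm) ^ (n + 1) * dl ^ n : ℕ) : ℂ) * ((dl : ℂ) * lam) *
        ((D (bb * n) : ℂ) ^ s * (C : ℂ) ^ (n + 1) * a n) +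
      ((k' ^ s * (C * dl) ^ (n + 1) * dm ^ n : ℕ) : ℂ) * ((dm : ℂ) * mu) *
        ((D (bb' * n) : ℂ) ^ s * (C' : ℂ) ^ (n + 1) * b n) := by
    rw [← e1, ← e2]; ring
  rw [show ((C * C' * dl * dm : ℕ) : ℂ) = (((C * C' * dl * dm : ℕ) : ℕ) : ℂ) from rfl] at key
  rw [key]
  exact (((nat_isIntegral _).mul hdll).mul (ha n)).add
    (((nat_isIntegral _).mul hdmm).mul (hb n))
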